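/- Let G be a directed graph and X, Y ⊆ V(G) disjoint nonempty sets. For every integer p ≥ 0, the number of important X–Y separators of size at most p is at most 4^p. More precisely, if λ is the minimum size of an X–Y separator, the number of important X–Y separators of size at most p is at most 2^(2p−λ). -/

import Mathlib

variable {V : Type*}

/-- A single edge step in `G \ S`: an edge of `E` with both endpoints outside `S`. -/
def DStep (E : V → V → Prop) (S : Set V) (a b : V) : Prop :=
  E a b ∧ a ∉ S ∧ b ∉ S

/-- `b` is reachable from `a` by a directed path in `G \ S`. -/
def DReach (E : V → V → Prop) (S : Set V) (a b : V) : Prop :=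
  Relation.ReflTransGen (DStep E S) a b

/-- The set of vertices reachable from the set `X` in `G \ S`. -/
def RSet (E : V → V → Prop) (S X : Set V) : Set V :=
  {v | ∃ x ∈ X, DReach E S x v}

/-- `S` is an `X`–`Y` separator: disjoint from `X ∪ Y` and destroying all `X → Y` paths. -/
def IsSep (E : V → V → Prop) (X Y S : Set V) : Prop :=
  S ∩ (X ∪ Y) = ∅ ∧ ∀ x ∈ X, ∀ y ∈ Y, ¬ DReach E S x y

/-- `S` is an inclusion-wise minimal `X`–`Y` separator. -/
def IsMinSep (E : V → V → Prop) (X Y S : Set V) : Prop :=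
  IsSep E X Y S ∧ ∀ S', S' ⊂ S → ¬ IsSep E X Y S'

/-- `S` is an important `X`–`Y` separator: a minimal separator such that no separator of at
most the same size has a strictly larger set of vertices reachable from `X`. -/
def IsImpSep (E : V → V → Prop) (X Y S : Set V) : Prop :=
  IsMinSep E X Y S ∧
    ¬ ∃ S', IsSep E X Y S' ∧ S'.ncard ≤ S.ncard ∧ RSet E S X ⊂ RSet E S' X

/-- `S` is a (vertex) multiway cut of `(G, T)`. -/
def IsMWC (E : V → V → Prop) (T S : Set V) : Prop :=
  S ∩ T = ∅ ∧ ∀ t₁ ∈ T, ∀ t₂ ∈ T, t₁ ≠ t₂ → ¬ DReach E S t₁ t₂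

/-- The forward shadow of `S` with respect to `T`: vertices outside `S ∪ T` not reachable
from `T` in `G \ S`. -/
def fShadow (E : V → V → Prop) (T S : Set V) : Set V :=
  {v | v ∉ S ∧ v ∉ T ∧ ∀ t ∈ T, ¬ DReach E S t v}

/-- The reverse shadow of `S` with respect to `T`: vertices outside `S ∪ T` that cannot
reach `T` in `G \ S`. -/
def rShadow (E : V → V → Prop) (T S : Set V) : Set V :=
  {v | v ∉ S ∧ v ∉ T ∧ ∀ t ∈ T, ¬ DReach E S v t}

/-- The adjacency of `torso(G, C)`: an edge `(a, b)` whenever `a, b ∈ C` and `G` has a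
directed `a → b` path whose internal vertices all lie outside `C`. -/
def TorsoAdj (E : V → V → Prop) (C : Set V) (a b : V) : Prop :=
  a ∈ C ∧ b ∈ C ∧ ∃ w, E a w ∧ Relation.ReflTransGen (fun x y => x ∉ C ∧ E x y) w b

/-- `S` is an `X`–`Y` separator avoiding the forbidden (undeletable) set `W`. -/
def IsSepF (E : V → V → Prop) (W X Y S : Set V) : Prop :=
  S ∩ (X ∪ Y ∪ W) = ∅ ∧ ∀ x ∈ X, ∀ y ∈ Y, ¬ DReach E S x y

/-- Minimal `X`–`Y` separator avoiding `W`. -/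
def IsMinSepF (E : V → V → Prop) (W X Y S : Set V) : Prop :=
  IsSepF E W X Y S ∧ ∀ S', S' ⊂ S → ¬ IsSepF E W X Y S'

/-- Important `X`–`Y` separator avoiding `W`. -/
def IsImpSepF (E : V → V → Prop) (W X Y S : Set V) : Prop :=
  IsMinSepF E W X Y S ∧
    ¬ ∃ S', IsSepF E W X Y S' ∧ S'.ncard ≤ S.ncard ∧ RSet E S X ⊂ RSet E S' X

/-- forward boundary of a set `R`. -/
def Bd (E : V → V → Prop) (R : Set V) : Set V := {w | w ∉ R ∧ ∃ u ∈ R, E u w}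

lemma notmem_of_inter_empty {S T : Set V} (h : S ∩ T = ∅) {x : V} (hx : x ∈ T) : x ∉ S :=
  fun hxS => (Set.eq_empty_iff_forall_notMem.1 h x) ⟨hxS, hx⟩

lemma mem_rset_self {E : V → V → Prop} {S X : Set V} {x : V} (hx : x ∈ X) : x ∈ RSet E S X :=
  ⟨x, hx, .refl⟩

lemma rset_trans {E : V → V → Prop} {S X : Set V} {v w : V}
    (hv : v ∈ RSet E S X) (h : DReach E S v w) : w ∈ RSet E S X := by
  obtain ⟨x, hx, hxv⟩ := hv; exact ⟨x, hx, hxv.trans h⟩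

lemma rset_disj {E : V → V → Prop} {S X : Set V} (hSX : ∀ x ∈ X, x ∉ S) :
    ∀ v ∈ RSet E S X, v ∉ S := by
  rintro v ⟨x, hx, hr⟩
  induction hr with
  | refl => exact hSX x hx
  | tail h₁ h₂ ih => exact h₂.2.2

lemma rset_subset_closed {E : V → V → Prop} {T X C : Set V}
    (hXC : X ⊆ C) (hcl : ∀ u ∈ C, ∀ w, E u w → w ∉ T → w ∈ C) :
    RSet E T X ⊆ C := by
  rintro w ⟨x, hx, hr⟩
  induction hr with
  | refl => exact hXC hx
  | tail h₁ h₂ ih => exact hcl _ ih _ h₂.1 h₂.2.2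

lemma rset_bd_subset {E : V → V → Prop} {X R : Set V} (hXR : X ⊆ R) :
    RSet E (Bd E R) X ⊆ R :=
  rset_subset_closed hXR (fun u hu w hw hnT => by
    by_contra h; exact hnT ⟨h, u, hu, hw⟩)

lemma rset_mono_of_disj {E : V → V → Prop} {S T X : Set V}
    (hT : ∀ v ∈ RSet E S X, v ∉ T) : RSet E S X ⊆ RSet E T X := by
  rintro w ⟨x, hx, hr⟩
  have key : ∀ w, DReach E S x w → w ∈ RSet E T X := by
    intro w hw
    induction hw with
    | refl => exact mem_rset_self hx
    | @tail c d h₁ h₂ ih =>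
        exact rset_trans ih (Relation.ReflTransGen.single
          ⟨h₂.1, hT _ ⟨x, hx, h₁⟩, hT _ ⟨x, hx, h₁.tail h₂⟩⟩)
  exact key w hr

lemma bd_subset_sep {E : V → V → Prop} {S X : Set V} (hSX : ∀ x ∈ X, x ∉ S) :
    Bd E (RSet E S X) ⊆ S := by
  rintro w ⟨hwR, u, hu, e⟩
  by_contra hwS
  exact hwR (rset_trans hu (Relation.ReflTransGen.single ⟨e, rset_disj hSX u hu, hwS⟩))

lemma sepF_notX {E : V → V → Prop} {W X Y S : Set V} (h : IsSepF E W X Y S) :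
    ∀ x ∈ X, x ∉ S :=
  fun x hx => notmem_of_inter_empty h.1 (Or.inl (Or.inl hx))

lemma sepF_not_rsetY {E : V → V → Prop} {W X Y S : Set V} (h : IsSepF E W X Y S) :
    ∀ y ∈ Y, y ∉ RSet E S X := by
  rintro y hy ⟨x, hx, hr⟩; exact h.2 x hx y hy hr

lemma isSepF_bd {E : V → V → Prop} {W X Y R : Set V} (hXR : X ⊆ R)
    (hYR : ∀ y ∈ Y, y ∉ R) (hd : Bd E R ∩ (X ∪ Y ∪ W) = ∅) :
    IsSepF E W X Y (Bd E R) :=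
  ⟨hd, fun x hx y hy hr => hYR y hy (rset_bd_subset hXR ⟨x, hx, hr⟩)⟩

lemma bd_union_subset {E : V → V → Prop} {R1 R2 : Set V} :
    Bd E (R1 ∪ R2) ∪ Bd E (R1 ∩ R2) ⊆ Bd E R1 ∪ Bd E R2 := by
  rintro w (⟨hw, u, hu, e⟩ | ⟨hw, u, hu, e⟩)
  · rcases hu with hu | hu
    · exact Or.inl ⟨fun h => hw (Or.inl h), u, hu, e⟩
    · exact Or.inr ⟨fun h => hw (Or.inr h), u, hu, e⟩
  · by_cases h1 : w ∈ R1
    · exact Or.inr ⟨fun h2 => hw ⟨h1, h2⟩, u, hu.2, e⟩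
    · exact Or.inl ⟨h1, u, hu.1, e⟩

lemma bd_inter_subset {E : V → V → Prop} {R1 R2 : Set V} :
    Bd E (R1 ∪ R2) ∩ Bd E (R1 ∩ R2) ⊆ Bd E R1 ∩ Bd E R2 := by
  rintro w ⟨⟨hw, _⟩, hw2, u, hu, e⟩
  exact ⟨⟨fun h => hw (Or.inl h), u, hu.1, e⟩, ⟨fun h => hw (Or.inr h), u, hu.2, e⟩⟩

lemma bd_submod [Fintype V] (E : V → V → Prop) (R1 R2 : Set V) :
    (Bd E (R1 ∪ R2)).ncard + (Bd E (R1 ∩ R2)).ncard ≤ (Bd E R1).ncard + (Bd E R2).ncard := by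
  rw [← Set.ncard_union_add_ncard_inter (Bd E (R1 ∪ R2)) (Bd E (R1 ∩ R2))
      (Set.toFinite _) (Set.toFinite _),
      ← Set.ncard_union_add_ncard_inter (Bd E R1) (Bd E R2) (Set.toFinite _) (Set.toFinite _)]
  exact Nat.add_le_add (Set.ncard_le_ncard bd_union_subset (Set.toFinite _))
    (Set.ncard_le_ncard bd_inter_subset (Set.toFinite _))

lemma rset_monoX {E : V → V → Prop} {S X X' : Set V} (h : X ⊆ X') :
    RSet E S X ⊆ RSet E S X' := by
  rintro w ⟨x, hx, hr⟩; exact ⟨x, h hx, hr⟩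

lemma rset_absorb {E : V → V → Prop} {S X X' : Set V} (h : X' ⊆ RSet E S X) :
    RSet E S X' ⊆ RSet E S X := by
  rintro w ⟨x', hx', hr⟩; exact rset_trans (h hx') hr

lemma combine [Fintype V] {E : V → V → Prop} {W X Y S1 S2 : Set V} {lam : ℕ}
    (h1 : IsSepF E W X Y S1) (h2 : IsSepF E W X Y S2)
    (hlam₂ : ∀ S, IsSepF E W X Y S → lam ≤ S.ncard) :
    IsSepF E W X Y (Bd E (RSet E S1 X ∪ RSet E S2 X)) ∧
      (Bd E (RSet E S1 X ∪ RSet E S2 X)).ncard + lam ≤ S1.ncard + S2.ncard ∧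
      RSet E S1 X ∪ RSet E S2 X ⊆ RSet E (Bd E (RSet E S1 X ∪ RSet E S2 X)) X ∧
      RSet E (Bd E (RSet E S1 X ∪ RSet E S2 X)) X ⊆ RSet E S1 X ∪ RSet E S2 X := by
  set R1 := RSet E S1 X with hR1
  set R2 := RSet E S2 X with hR2
  have hXU : X ⊆ R1 ∪ R2 := fun x hx => Or.inl (mem_rset_self hx)
  have hXI : X ⊆ R1 ∩ R2 := fun x hx => ⟨mem_rset_self hx, mem_rset_self hx⟩
  have hYU : ∀ y ∈ Y, y ∉ R1 ∪ R2 := fun y hy h =>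
    h.elim (sepF_not_rsetY h1 y hy) (sepF_not_rsetY h2 y hy)
  have hYI : ∀ y ∈ Y, y ∉ R1 ∩ R2 := fun y hy h => sepF_not_rsetY h1 y hy h.1
  have hsub : Bd E (R1 ∪ R2) ∪ Bd E (R1 ∩ R2) ⊆ S1 ∪ S2 :=
    bd_union_subset.trans
      (Set.union_subset_union (bd_subset_sep (sepF_notX h1)) (bd_subset_sep (sepF_notX h2)))
  have hdU : Bd E (R1 ∪ R2) ∩ (X ∪ Y ∪ W) = ∅ := by
    apply Set.eq_empty_iff_forall_notMem.2
    rintro w ⟨hw1, hw2⟩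
    rcases hsub (Or.inl hw1) with h | h
    · exact notmem_of_inter_empty h1.1 hw2 h
    · exact notmem_of_inter_empty h2.1 hw2 h
  have hdI : Bd E (R1 ∩ R2) ∩ (X ∪ Y ∪ W) = ∅ := by
    apply Set.eq_empty_iff_forall_notMem.2
    rintro w ⟨hw1, hw2⟩
    rcases hsub (Or.inr hw1) with h | h
    · exact notmem_of_inter_empty h1.1 hw2 h
    · exact notmem_of_inter_empty h2.1 hw2 h
  have sepU := isSepF_bd (E := E) hXU hYU hdU
  have sepI := isSepF_bd (E := E) hXI hYI hdI
  have hlamI := hlam₂ _ sepI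
  have hsm := bd_submod E R1 R2
  have hb1 : (Bd E R1).ncard ≤ S1.ncard :=
    Set.ncard_le_ncard (bd_subset_sep (sepF_notX h1)) (Set.toFinite _)
  have hb2 : (Bd E R2).ncard ≤ S2.ncard :=
    Set.ncard_le_ncard (bd_subset_sep (sepF_notX h2)) (Set.toFinite _)
  have m1 : R1 ⊆ RSet E (Bd E (R1 ∪ R2)) X :=
    rset_mono_of_disj (fun z hz hzB => hzB.1 (Or.inl hz))
  have m2 : R2 ⊆ RSet E (Bd E (R1 ∪ R2)) X :=
    rset_mono_of_disj (fun z hz hzB => hzB.1 (Or.inr hz))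
  exact ⟨sepU, by omega, Set.union_subset m1 m2, rset_bd_subset hXU⟩

lemma key_easy1 [Fintype V] (E : V → V → Prop) (W X Y : Set V) (p lam : ℕ)
    (hlam₂ : ∀ S, IsSepF E W X Y S → lam ≤ S.ncard) (h : p < lam) :
    {S : Set V | IsImpSepF E W X Y S ∧ S.ncard ≤ p} = ∅ := by
  ext S
  simp only [Set.mem_setOf_eq, Set.mem_empty_iff_false, iff_false, not_and]
  intro hS hcard
  exact absurd (hlam₂ S hS.1.1) (by omega)

lemma key_easy2 [Fintype V] (E : V → V → Prop) (W X Y : Set V) (p : ℕ) (S0 : Set V)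
    (hS0 : IsSepF E W X Y S0) (h0 : S0.ncard = 0) :
    {S : Set V | IsImpSepF E W X Y S ∧ S.ncard ≤ p}.ncard ≤ 1 := by
  have hS0e : S0 = ∅ := (Set.ncard_eq_zero (Set.toFinite _)).1 h0
  have hsub : {S : Set V | IsImpSepF E W X Y S ∧ S.ncard ≤ p} ⊆ {∅} := by
    rintro S ⟨hS, _⟩
    by_contra hne
    exact hS.1.2 ∅ (Set.empty_ssubset.2 (Set.nonempty_iff_ne_empty.2
      (fun h => hne (Set.mem_singleton_iff.2 h)))) (hS0e ▸ hS0)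
  calc {S : Set V | IsImpSepF E W X Y S ∧ S.ncard ≤ p}.ncard
      ≤ ({∅} : Set (Set V)).ncard := Set.ncard_le_ncard hsub (Set.toFinite _)
    _ = 1 := Set.ncard_singleton _


lemma key [Fintype V] (μ : ℕ) : ∀ (E : V → V → Prop) (W X Y : Set V) (p lam : ℕ),
    (∃ S, IsSepF E W X Y S ∧ S.ncard = lam) →
    (∀ S, IsSepF E W X Y S → lam ≤ S.ncard) →
    2 * p - lam ≤ μ →
    {S : Set V | IsImpSepF E W X Y S ∧ S.ncard ≤ p}.ncard ≤ 2 ^ (2 * p - lam) := by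
  induction μ with
  | zero =>
    intro E W X Y p lam hlam₁ hlam₂ hμ
    rcases Nat.lt_or_ge p lam with h | h
    · rw [key_easy1 E W X Y p lam hlam₂ h]; simp
    rcases Nat.eq_zero_or_pos lam with h0 | h0
    · obtain ⟨S0, hS0, hc⟩ := hlam₁
      exact le_trans (key_easy2 E W X Y p S0 hS0 (h0 ▸ hc)) Nat.one_le_two_pow
    · omega
  | succ μ ih =>
    intro E W X Y p lam hlam₁ hlam₂ hμ
    rcases Nat.lt_or_ge p lam with h | hpl
    · rw [key_easy1 E W X Y p lam hlam₂ h]; simp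
    rcases Nat.eq_zero_or_pos lam with h0 | h0
    · obtain ⟨S0, hS0, hc⟩ := hlam₁
      exact le_trans (key_easy2 E W X Y p S0 hS0 (h0 ▸ hc)) Nat.one_le_two_pow
    -- main case: 1 ≤ lam ≤ p
    obtain ⟨S0, hS0⟩ := hlam₁
    -- maximal minimum separator
    obtain ⟨Sm, ⟨hSmSep, hSmCard⟩, hSmMax⟩ :
        ∃ Sm, (IsSepF E W X Y Sm ∧ Sm.ncard = lam) ∧
          ∀ S', IsSepF E W X Y S' → S'.ncard = lam → RSet E S' X ⊆ RSet E Sm X := by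
      obtain ⟨Sm, hSm, hmax⟩ := Set.Finite.exists_maximalFor
        (fun S => (RSet E S X).ncard) {S : Set V | IsSepF E W X Y S ∧ S.ncard = lam}
        (Set.toFinite _) ⟨S0, hS0⟩
      simp only [Set.mem_setOf_eq] at hSm hmax
      refine ⟨Sm, hSm, ?_⟩
      intro S' hS' hS'c
      obtain ⟨sepU, cardU, subU, supU⟩ := combine hS' hSm.1 hlam₂
      have hUcard : (Bd E (RSet E S' X ∪ RSet E Sm X)).ncard = lam :=
        le_antisymm (by have := hSm.2; omega) (hlam₂ _ sepU)
      have h1 : (RSet E Sm X).ncard ≤ (RSet E (Bd E (RSet E S' X ∪ RSet E Sm X)) X).ncard :=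
        Set.ncard_le_ncard (fun w hw => subU (Or.inr hw)) (Set.toFinite _)
      have heq := le_antisymm h1 (hmax ⟨sepU, hUcard⟩ h1)
      have heq2 : RSet E Sm X = RSet E (Bd E (RSet E S' X ∪ RSet E Sm X)) X :=
        Set.eq_of_subset_of_ncard_le (fun w hw => subU (Or.inr hw)) heq.ge (Set.toFinite _)
      exact (show RSet E S' X ⊆ _ from fun w hw => subU (Or.inl hw)).trans heq2.ge
    -- Sm is exactly the boundary of its reachable set
    have hXsubR : X ⊆ RSet E Sm X := fun x hx => mem_rset_self hx
    have hbdSm : Bd E (RSet E Sm X) = Sm := by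
      have hs1 : Bd E (RSet E Sm X) ⊆ Sm := bd_subset_sep (sepF_notX hSmSep)
      have hd : Bd E (RSet E Sm X) ∩ (X ∪ Y ∪ W) = ∅ := by
        apply Set.eq_empty_iff_forall_notMem.2
        rintro w ⟨hw1, hw2⟩
        exact notmem_of_inter_empty hSmSep.1 hw2 (hs1 hw1)
      have hs2 : IsSepF E W X Y (Bd E (RSet E Sm X)) :=
        isSepF_bd hXsubR (sepF_not_rsetY hSmSep) hd
      exact Set.eq_of_subset_of_ncard_le hs1 (by rw [hSmCard]; exact hlam₂ _ hs2)
        (Set.toFinite _)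
    have hSmne : Sm.Nonempty := Set.nonempty_of_ncard_ne_zero (by omega)
    obtain ⟨v, hv⟩ := hSmne
    have hvBd : v ∈ Bd E (RSet E Sm X) := hbdSm.symm ▸ hv
    obtain ⟨hvR, u, hu, huv⟩ := hvBd
    have hvXYW : v ∉ X ∪ Y ∪ W := fun h => (notmem_of_inter_empty hSmSep.1 h) hv
    -- every important separator sees the maximal reachable set
    have hL3 : ∀ S, IsImpSepF E W X Y S → RSet E Sm X ⊆ RSet E S X := by
      intro S hS
      by_contra hcon
      obtain ⟨z, hz1, hz2⟩ := Set.not_subset.1 hcon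
      obtain ⟨sepU, cardU, subU, supU⟩ := combine hS.1.1 hSmSep hlam₂
      refine hS.2 ⟨Bd E (RSet E S X ∪ RSet E Sm X), sepU, by omega, ?_⟩
      rw [Set.ssubset_def]
      refine ⟨fun w hw => subU (Or.inl hw), fun hback => hz2 (hback (subU (Or.inr hz1)))⟩
    -- split according to membership of v
    have hsplit : {S : Set V | IsImpSepF E W X Y S ∧ S.ncard ≤ p}.ncard ≤
        ({S : Set V | (IsImpSepF E W X Y S ∧ S.ncard ≤ p) ∧ v ∈ S}).ncard +
        ({S : Set V | (IsImpSepF E W X Y S ∧ S.ncard ≤ p) ∧ v ∉ S}).ncard := by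
      have hun : {S : Set V | IsImpSepF E W X Y S ∧ S.ncard ≤ p} =
          {S : Set V | (IsImpSepF E W X Y S ∧ S.ncard ≤ p) ∧ v ∈ S} ∪
          {S : Set V | (IsImpSepF E W X Y S ∧ S.ncard ≤ p) ∧ v ∉ S} := by
        ext S; by_cases hvS : v ∈ S <;> simp [hvS]
      rw [hun]
      exact Set.ncard_union_le _ _
    -- Branch A : separators containing v, recurse in G - v
    set E' : V → V → Prop := fun a b => E a b ∧ a ≠ v ∧ b ≠ v with hE'
    have stepIff : ∀ (T : Set V) a b, DStep E' T a b ↔ DStep E (insert v T) a b := by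
      intro T a b
      constructor
      · rintro ⟨⟨e, ha, hb⟩, ha', hb'⟩
        exact ⟨e, fun h => h.elim (fun h => ha h) ha', fun h => h.elim (fun h => hb h) hb'⟩
      · rintro ⟨e, ha, hb⟩
        exact ⟨⟨e, fun h => ha (Or.inl h), fun h => hb (Or.inl h)⟩,
          fun h => ha (Or.inr h), fun h => hb (Or.inr h)⟩
    have reachIff : ∀ (T : Set V) a b, DReach E' T a b ↔ DReach E (insert v T) a b :=
      fun T a b => ⟨Relation.ReflTransGen.mono (fun a b h => (stepIff T a b).1 h) _ _,
        Relation.ReflTransGen.mono (fun a b h => (stepIff T a b).2 h) _ _⟩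
    have rsetEq : ∀ (T : Set V), RSet E' T X = RSet E (insert v T) X := by
      intro T; ext w
      constructor
      · rintro ⟨x, hx, h⟩; exact ⟨x, hx, (reachIff T x w).1 h⟩
      · rintro ⟨x, hx, h⟩; exact ⟨x, hx, (reachIff T x w).2 h⟩
    have insSep : ∀ T, IsSepF E' W X Y T → IsSepF E W X Y (insert v T) := by
      intro T hT
      constructor
      · apply Set.eq_empty_iff_forall_notMem.2
        rintro w ⟨hw1, hw2⟩
        rcases hw1 with rfl | hw1
        · exact hvXYW hw2
        · exact notmem_of_inter_empty hT.1 hw2 hw1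
      · intro x hx y hy hr
        exact hT.2 x hx y hy ((reachIff T x y).2 hr)
    have sepE' : ∀ T, IsSepF E W X Y T → IsSepF E' W X Y T := by
      intro T hT
      exact ⟨hT.1, fun x hx y hy hr => hT.2 x hx y hy
        (Relation.ReflTransGen.mono (fun a b h => ⟨h.1.1, h.2.1, h.2.2⟩) _ _ hr)⟩
    have hN1 : {n : ℕ | ∃ S, IsSepF E' W X Y S ∧ S.ncard = n}.Nonempty :=
      ⟨lam, Sm, sepE' Sm hSmSep, hSmCard⟩
    set lam1 := sInf {n : ℕ | ∃ S, IsSepF E' W X Y S ∧ S.ncard = n} with hlam1def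
    obtain ⟨S1, hS1sep, hS1card⟩ := Nat.sInf_mem hN1
    have hlam1₂ : ∀ S, IsSepF E' W X Y S → lam1 ≤ S.ncard :=
      fun S h => Nat.sInf_le ⟨S, h, rfl⟩
    have hlam1lb : lam ≤ lam1 + 1 := by
      have h1 := hlam₂ _ (insSep S1 hS1sep)
      have h2 := Set.ncard_insert_le v S1
      omega
    have hA : ∀ S, (IsImpSepF E W X Y S ∧ S.ncard ≤ p) ∧ v ∈ S →
        IsImpSepF E' W X Y (S \ {v}) ∧ (S \ {v}).ncard ≤ p - 1 := by
      rintro S ⟨⟨hS, hScard⟩, hvS⟩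
      have hins : insert v (S \ {v}) = S := by
        rw [Set.insert_diff_singleton]; exact Set.insert_eq_self.2 hvS
      have hcard' : (S \ {v}).ncard + 1 = S.ncard :=
        Set.ncard_diff_singleton_add_one hvS (Set.toFinite _)
      refine ⟨⟨⟨⟨?_, ?_⟩, ?_⟩, ?_⟩, by omega⟩
      · apply Set.eq_empty_iff_forall_notMem.2
        rintro w ⟨hw1, hw2⟩
        exact notmem_of_inter_empty hS.1.1.1 hw2 hw1.1
      · intro x hx y hy hr
        exact hS.1.1.2 x hx y hy (hins ▸ (reachIff _ x y).1 hr)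
      · intro S'' hsub hsep''
        have hvS'' : v ∉ S'' := fun h => (hsub.1 h).2 rfl
        obtain ⟨w, hw1, hw2⟩ := Set.exists_of_ssubset hsub
        refine hS.1.2 (insert v S'') ?_ (insSep S'' hsep'')
        rw [Set.ssubset_def]
        constructor
        · rintro z (rfl | hz)
          · exact hvS
          · exact (hsub.1 hz).1
        · intro hback
          rcases hback hw1.1 with rfl | hz
          · exact hw1.2 rfl
          · exact hw2 hz
      · rintro ⟨S'', hsep'', hle, hss⟩
        apply hS.2
        refine ⟨insert v S'', insSep S'' hsep'', ?_, ?_⟩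
        · have := Set.ncard_insert_le v S''
          omega
        · rw [rsetEq, rsetEq, hins] at hss
          exact hss
    have hAcard : ({S : Set V | (IsImpSepF E W X Y S ∧ S.ncard ≤ p) ∧ v ∈ S}).ncard ≤
        2 ^ (2 * p - lam - 1) := by
      have hstep : ({S : Set V | (IsImpSepF E W X Y S ∧ S.ncard ≤ p) ∧ v ∈ S}).ncard ≤
          ({S : Set V | IsImpSepF E' W X Y S ∧ S.ncard ≤ p - 1}).ncard := by
        apply Set.ncard_le_ncard_of_injOn (fun S => S \ {v})
        · intro S hS; exact hA S hS
        · intro T1 h1 T2 h2 heq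
          have h3 : insert v (T1 \ {v}) = insert v (T2 \ {v}) := by
            rw [show T1 \ {v} = T2 \ {v} from heq]
          rwa [Set.insert_diff_singleton, Set.insert_diff_singleton,
            Set.insert_eq_self.2 h1.2, Set.insert_eq_self.2 h2.2] at h3
      refine hstep.trans ((ih E' W X Y (p - 1) lam1 ⟨S1, hS1sep, hS1card⟩ hlam1₂
        (by omega)).trans ?_)
      exact Nat.pow_le_pow_right (by norm_num) (by omega)
    -- Branch B : separators avoiding v, push X forward
    have hBcard : ({S : Set V | (IsImpSepF E W X Y S ∧ S.ncard ≤ p) ∧ v ∉ S}).ncard ≤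
        2 ^ (2 * p - lam - 1) := by
      rcases Set.eq_empty_or_nonempty
          {S : Set V | (IsImpSepF E W X Y S ∧ S.ncard ≤ p) ∧ v ∉ S} with hBe | hBne
      · rw [hBe]; simp
      set X' : Set V := insert v (RSet E Sm X) with hX'def
      have hXX' : X ⊆ X' := fun x hx => Set.mem_insert_of_mem v (hXsubR hx)
      -- facts for members of B
      have hBfacts : ∀ S, IsImpSepF E W X Y S → v ∉ S → X' ⊆ RSet E S X := by
        intro S hS hvS
        have hRsub : RSet E Sm X ⊆ RSet E S X := hL3 S hS
        have hvRS : v ∈ RSet E S X :=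
          rset_trans (hRsub hu) (Relation.ReflTransGen.single
            ⟨huv, rset_disj (sepF_notX hS.1.1) u (hRsub hu), hvS⟩)
        exact Set.insert_subset hvRS hRsub
      have hBsep : ∀ S, IsImpSepF E W X Y S → v ∉ S → IsSepF E W X' Y S := by
        intro S hS hvS
        have hX'sub := hBfacts S hS hvS
        constructor
        · apply Set.eq_empty_iff_forall_notMem.2
          rintro w ⟨hw1, hw2⟩
          rcases hw2 with (hw2 | hw2) | hw2
          · exact rset_disj (sepF_notX hS.1.1) w (hX'sub hw2) hw1
          · exact notmem_of_inter_empty hS.1.1.1 (Or.inl (Or.inr hw2)) hw1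
          · exact notmem_of_inter_empty hS.1.1.1 (Or.inr hw2) hw1
        · intro x' hx' y hy hr
          exact sepF_not_rsetY hS.1.1 y hy (rset_trans (hX'sub hx') hr)
      -- separators for X' are separators for X
      have hX'X : ∀ T, IsSepF E W X' Y T → IsSepF E W X Y T := by
        intro T hT
        constructor
        · apply Set.eq_empty_iff_forall_notMem.2
          rintro w ⟨hw1, hw2⟩
          apply notmem_of_inter_empty hT.1 _ hw1
          rcases hw2 with (hw2 | hw2) | hw2
          · exact Or.inl (Or.inl (hXX' hw2))
          · exact Or.inl (Or.inr hw2)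
          · exact Or.inr hw2
        · intro x hx y hy hr
          exact hT.2 x (hXX' hx) y hy hr
      obtain ⟨Sb, hSb⟩ := hBne
      have hN2 : {n : ℕ | ∃ S, IsSepF E W X' Y S ∧ S.ncard = n}.Nonempty :=
        ⟨Sb.ncard, Sb, hBsep Sb hSb.1.1 hSb.2, rfl⟩
      set lam2 := sInf {n : ℕ | ∃ S, IsSepF E W X' Y S ∧ S.ncard = n} with hlam2def
      obtain ⟨S2, hS2sep, hS2card⟩ := Nat.sInf_mem hN2
      have hlam2₂ : ∀ S, IsSepF E W X' Y S → lam2 ≤ S.ncard :=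
        fun S h => Nat.sInf_le ⟨S, h, rfl⟩
      -- X' separators avoid the maximal reachable set entirely
      have hX'disj : ∀ T, IsSepF E W X' Y T →
          (∀ w ∈ RSet E Sm X, w ∉ T) ∧ v ∉ T := by
        intro T hT
        constructor
        · intro w hw
          exact notmem_of_inter_empty hT.1 (Or.inl (Or.inl (Set.mem_insert_of_mem v hw)))
        · exact notmem_of_inter_empty hT.1 (Or.inl (Or.inl (Set.mem_insert _ _)))
      have hX'reach : ∀ T, IsSepF E W X' Y T → X' ⊆ RSet E T X := by
        intro T hT
        obtain ⟨hd, hvT⟩ := hX'disj T hT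
        have hsub2 : RSet E Sm X ⊆ RSet E T X := rset_mono_of_disj hd
        exact Set.insert_subset
          (rset_trans (hsub2 hu) (Relation.ReflTransGen.single ⟨huv, hd u hu, hvT⟩)) hsub2
      have hlam2lb : lam + 1 ≤ lam2 := by
        rcases Nat.lt_or_ge lam lam2 with h | h
        · omega
        · exfalso
          have hXsep2 := hX'X _ hS2sep
          have h1 : lam ≤ lam2 := by rw [hlam2def, ← hS2card]; exact hlam₂ _ hXsep2
          have hmax := hSmMax S2 hXsep2 (by omega)
          have hvin : v ∈ RSet E S2 X := hX'reach S2 hS2sep (Set.mem_insert _ _)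
          exact hvR (hmax hvin)
      -- B maps into important X'-separators
      have hB : ∀ S, (IsImpSepF E W X Y S ∧ S.ncard ≤ p) ∧ v ∉ S →
          IsImpSepF E W X' Y S ∧ S.ncard ≤ p := by
        rintro S ⟨⟨hS, hSp⟩, hvS⟩
        have hsepX' := hBsep S hS hvS
        have hX'sub := hBfacts S hS hvS
        refine ⟨⟨⟨hsepX', ?_⟩, ?_⟩, hSp⟩
        · intro S'' hsub hsep''
          exact hS.1.2 S'' hsub (hX'X _ hsep'')
        · rintro ⟨S'', hsep'', hle, hss⟩
          apply hS.2
          have e1 : RSet E S X' = RSet E S X :=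
            Set.Subset.antisymm (rset_absorb hX'sub) (rset_monoX hXX')
          have e2 : RSet E S'' X' = RSet E S'' X :=
            Set.Subset.antisymm (rset_absorb (hX'reach S'' hsep'')) (rset_monoX hXX')
          rw [e1, e2] at hss
          exact ⟨S'', hX'X _ hsep'', hle, hss⟩
      have hstep : ({S : Set V | (IsImpSepF E W X Y S ∧ S.ncard ≤ p) ∧ v ∉ S}).ncard ≤
          ({S : Set V | IsImpSepF E W X' Y S ∧ S.ncard ≤ p}).ncard :=
        Set.ncard_le_ncard (fun S hS => hB S hS) (Set.toFinite _)
      refine hstep.trans ((ih E W X' Y p lam2 ⟨S2, hS2sep, hS2card⟩ hlam2₂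
        (by omega)).trans ?_)
      exact Nat.pow_le_pow_right (by norm_num) (by omega)
    -- combine
    have hfin : 2 ^ (2 * p - lam - 1) + 2 ^ (2 * p - lam - 1) = 2 ^ (2 * p - lam) := by
      rw [← two_mul, ← pow_succ']
      congr 1
      omega
    calc {S : Set V | IsImpSepF E W X Y S ∧ S.ncard ≤ p}.ncard
        ≤ _ + _ := hsplit
      _ ≤ 2 ^ (2 * p - lam - 1) + 2 ^ (2 * p - lam - 1) := Nat.add_le_add hAcard hBcard
      _ = 2 ^ (2 * p - lam) := hfin

/-- If `lam` is the minimum size of an `X`–`Y` separator, then the number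
of important `X`–`Y` separators of size at most `p` is at most `2^(2p − lam)`, and in
particular at most `4^p`. -/
theorem count_important_separators [Fintype V]
    (E : V → V → Prop) (W X Y : Set V)
    (hX : X.Nonempty) (hY : Y.Nonempty) (hXY : Disjoint X Y)
    (p lam : ℕ)
    (hlam₁ : ∃ S, IsSepF E W X Y S ∧ S.ncard = lam)
    (hlam₂ : ∀ S, IsSepF E W X Y S → lam ≤ S.ncard) :
    {S : Set V | IsImpSepF E W X Y S ∧ S.ncard ≤ p}.ncard ≤ 2 ^ (2 * p - lam) ∧
      {S : Set V | IsImpSepF E W X Y S ∧ S.ncard ≤ p}.ncard ≤ 4 ^ p := by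
  have h1 := key (2 * p - lam) E W X Y p lam hlam₁ hlam₂ le_rfl
  refine ⟨h1, h1.trans ?_⟩
  calc 2 ^ (2 * p - lam) ≤ 2 ^ (2 * p) := Nat.pow_le_pow_right (by norm_num) (by omega)
    _ = 4 ^ p := by rw [pow_mul]; norm_num
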